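/- Let A, B be invertible elements of an associative unital ring R satisfying the fundamental relation A⁻¹B⁻¹AB - B⁻¹AB = BA⁻¹B⁻¹A - A, with C = A⁻¹B⁻¹A(1-A) and D = 1 - A⁻¹B⁻¹AB. If C is invertible, then the 2×2 matrix S = [[A, B], [C, D]] is invertible in M_2(R). -/
import Mathlib

/-- A lower unitriangular 2×2 matrix is a unit. -/
lemma lower_tri_isUnit {R : Type} [Ring R] (e : R) :
    IsUnit !![(1:R), 0; e, 1] := by
  refine ⟨⟨!![(1:R), 0; e, 1], !![(1:R), 0; -e, 1], ?_, ?_⟩, rfl⟩ <;>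
    simp [Matrix.mul_fin_two, ← Matrix.one_fin_two]

/-- An upper triangular 2×2 matrix with invertible diagonal is a unit. -/
lemma upper_tri_isUnit {R : Type} [Ring R] (a b d x y : R)
    (hax : a * x = 1) (hxa : x * a = 1) (hdy : d * y = 1) (hyd : y * d = 1) :
    IsUnit !![a, b; 0, d] := by
  have h2 : a * -(x * b * y) + b * y = 0 := by
    rw [mul_neg, ← mul_assoc, ← mul_assoc, hax, one_mul, neg_add_cancel]
  have h3 : x * b + -(x * b * y) * d = 0 := by
    rw [neg_mul, mul_assoc (x * b) y d, hyd, mul_one, add_neg_cancel]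
  refine ⟨⟨!![a, b; 0, d], !![x, -(x * b * y); 0, y], ?_, ?_⟩, rfl⟩
  · rw [Matrix.mul_fin_two]
    simp only [mul_zero, zero_mul, add_zero, zero_add, hax, hdy, h2, ← Matrix.one_fin_two]
  · rw [Matrix.mul_fin_two]
    simp only [mul_zero, zero_mul, add_zero, zero_add, hxa, hyd, h3, ← Matrix.one_fin_two]

lemma key_S_isUnit {R : Type} [Ring R] (a a' b b' : R)
    (haa' : a * a' = 1) (ha'a : a' * a = 1) (hbb' : b * b' = 1) (hb'b : b' * b = 1)
    (hC : IsUnit (a' * b' * a * (1 - a))) :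
    IsUnit !![a, b; a' * b' * a * (1 - a), 1 - a' * b' * a * b] := by
  have ha' : IsUnit a' := ⟨⟨a', a, ha'a, haa'⟩, rfl⟩
  -- a'*b'*a is a unit
  have hv : IsUnit (a' * b' * a) := by
    refine ⟨⟨a' * b' * a, a' * b * a, ?_, ?_⟩, rfl⟩
    · calc a' * b' * a * (a' * b * a) = a' * b' * (a * a') * b * a := by noncomm_ring
        _ = 1 := by rw [haa', mul_one, mul_assoc a' b' b, hb'b, mul_one, ha'a]
    · calc a' * b * a * (a' * b' * a) = a' * b * (a * a') * b' * a := by noncomm_ring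
        _ = 1 := by rw [haa', mul_one, mul_assoc a' b b', hbb', mul_one, ha'a]
  -- hence 1 - a is a unit
  have h1a : IsUnit (1 - a) := by
    have h2 := (hv.unit⁻¹).isUnit.mul hC
    rwa [← mul_assoc, hv.val_inv_mul, one_mul] at h2
  -- hence 1 - a' is a unit
  have hF : IsUnit (1 - a') := by
    have hk : a' * (1 - a) = -(1 - a') := by
      rw [mul_sub, mul_one, ha'a]; noncomm_ring
    have h2 := ha'.mul h1a
    rw [hk] at h2
    simpa using h2.neg
  obtain ⟨f, hf1, hf2⟩ : ∃ f, (1 - a') * f = 1 ∧ f * (1 - a') = 1 :=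
    ⟨↑hF.unit⁻¹, hF.mul_val_inv, hF.val_inv_mul⟩
  -- the LU factorization
  have h21 : (a' * b' - a' * b' * a) * a + 1 * 0 = a' * b' * a * (1 - a) := by noncomm_ring
  have h22 : (a' * b' - a' * b' * a) * b + 1 * (1 - a') = 1 - a' * b' * a * b := by
    calc (a' * b' - a' * b' * a) * b + 1 * (1 - a')
        = a' * (b' * b) - a' * b' * a * b + (1 - a') := by noncomm_ring
      _ = 1 - a' * b' * a * b := by rw [hb'b, mul_one]; noncomm_ring
  have hS : !![a, b; a' * b' * a * (1 - a), 1 - a' * b' * a * b] =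
      !![(1:R), 0; a' * b' - a' * b' * a, 1] * !![a, b; 0, 1 - a'] := by
    rw [Matrix.mul_fin_two, h21, h22, one_mul, one_mul, zero_mul, zero_mul, add_zero, add_zero]
  rw [hS]
  exact (lower_tri_isUnit _).mul (upper_tri_isUnit a b (1 - a') a' f haa' ha'a hf1 hf2)

/-- For units `A, B` of a ring `R` satisfying the fundamental relation, with
`C = A⁻¹B⁻¹A(1-A)` and `D = 1 - A⁻¹B⁻¹AB`: if `C` is invertible then the matrix
`S = [[A,B],[C,D]]` is invertible in `M₂(R)`. -/
theorem S_isUnit_of_C_isUnit (R : Type) [Ring R] (A B : Rˣ)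
    (hfund : ((A⁻¹ : Rˣ) : R) * ((B⁻¹ : Rˣ) : R) * (A : R) * (B : R) -
        ((B⁻¹ : Rˣ) : R) * (A : R) * (B : R) =
      (B : R) * ((A⁻¹ : Rˣ) : R) * ((B⁻¹ : Rˣ) : R) * (A : R) - (A : R))
    (hC : IsUnit (((A⁻¹ : Rˣ) : R) * ((B⁻¹ : Rˣ) : R) * (A : R) * (1 - (A : R)))) :
    IsUnit !![(A : R), (B : R);
       ((A⁻¹ : Rˣ) : R) * ((B⁻¹ : Rˣ) : R) * (A : R) * (1 - (A : R)),
       1 - ((A⁻¹ : Rˣ) : R) * ((B⁻¹ : Rˣ) : R) * (A : R) * (B : R)] := by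
  exact key_S_isUnit (A : R) ((A⁻¹ : Rˣ) : R) (B : R) ((B⁻¹ : Rˣ) : R)
    A.mul_inv A.inv_mul B.mul_inv B.inv_mul hC
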